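/- The minimum defect over all Mondrian partitions of the 5×5 square equals 4; that is, d(5) = d_3(5) = 4, and moreover every Mondrian partition of the 5×5 square into k ≥ 4 rectangles has defect strictly greater than 4. -/

import Mathlib

/-- An axis-aligned rectangle with integer coordinates placed on the grid:
lower-left corner `(x, y)`, width `w`, and height `h`. -/
structure Rect where
  x : ℕ
  y : ℕ
  w : ℕ
  h : ℕ
deriving DecidableEq

/-- The area of a rectangle. -/
def Rect.area (r : Rect) : ℕ := r.w * r.h

/-- Two rectangles are congruent if they have the same dimensions,
possibly after a ninety-degree rotation. -/
def Rect.Congruent (r s : Rect) : Prop :=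
  (r.w = s.w ∧ r.h = s.h) ∨ (r.w = s.h ∧ r.h = s.w)

/-- The rectangle `r` covers the unit grid cell `[i, i+1) × [j, j+1)`. -/
def Rect.Covers (r : Rect) (i j : ℕ) : Prop :=
  r.x ≤ i ∧ i < r.x + r.w ∧ r.y ≤ j ∧ j < r.y + r.h

/-- A Mondrian partition of the `n × n` square: a finite collection of
pairwise non-congruent rectangles with positive integer side lengths that
tile the square (every cell of the square is covered by exactly one
rectangle, and rectangles lie inside the square). -/
structure Mondrian (n : ℕ) where
  rects : Finset Rect
  pos : ∀ r ∈ rects, 0 < r.w ∧ 0 < r.h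
  inside : ∀ r ∈ rects, r.x + r.w ≤ n ∧ r.y + r.h ≤ n
  cover : ∀ i j : ℕ, i < n → j < n → ∃! r : Rect, r ∈ rects ∧ r.Covers i j
  noncong : ∀ r ∈ rects, ∀ s ∈ rects, r ≠ s → ¬ r.Congruent s

/-- The defect of a Mondrian partition: the difference between the largest
and the smallest rectangle areas. -/
def Mondrian.defect {n : ℕ} (P : Mondrian n) : ℕ :=
  P.rects.sup fun r => P.rects.sup fun s => r.area - s.area

/-- A Mondrian partition is perfect if all its rectangles have the same area. -/
def Mondrian.IsPerfect {n : ℕ} (P : Mondrian n) : Prop :=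
  ∀ r ∈ P.rects, ∀ s ∈ P.rects, r.area = s.area

/-- `mondrianDk n k` is the minimum defect over all Mondrian partitions of the
`n × n` square using exactly `k` rectangles. -/
noncomputable def mondrianDk (n k : ℕ) : ℕ :=
  sInf {d | ∃ P : Mondrian n, P.rects.card = k ∧ P.defect = d}

/-- `mondrianD n` is the minimum defect over all Mondrian partitions of the
`n × n` square (into at least two rectangles). -/
noncomputable def mondrianD (n : ℕ) : ℕ :=
  sInf {d | ∃ P : Mondrian n, 2 ≤ P.rects.card ∧ P.defect = d}

/-! ### Auxiliary material -/

instance (r : Rect) (i j : ℕ) : Decidable (r.Covers i j) := by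
  unfold Rect.Covers; infer_instance

instance (r s : Rect) : Decidable (r.Congruent s) := by
  unfold Rect.Congruent; infer_instance

/-- The grid cells occupied by a rectangle. -/
def Rect.cells (r : Rect) : Finset (ℕ × ℕ) :=
  Finset.Ico r.x (r.x + r.w) ×ˢ Finset.Ico r.y (r.y + r.h)

lemma Rect.mem_cells {r : Rect} {p : ℕ × ℕ} : p ∈ r.cells ↔ r.Covers p.1 p.2 := by
  simp [Rect.cells, Rect.Covers, Finset.mem_product, and_assoc]

lemma Rect.card_cells (r : Rect) : r.cells.card = r.area := by
  simp [Rect.cells, Rect.area, Nat.card_Ico]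

/-- The areas of the rectangles of a Mondrian partition sum to `n * n`. -/
lemma Mondrian.sum_area {n : ℕ} (P : Mondrian n) : ∑ r ∈ P.rects, r.area = n * n := by
  classical
  have key : (Finset.range n ×ˢ Finset.range n) = P.rects.biUnion Rect.cells := by
    ext ⟨i, j⟩
    simp only [Finset.mem_product, Finset.mem_range, Finset.mem_biUnion]
    constructor
    · rintro ⟨hi, hj⟩
      obtain ⟨r, ⟨hr, hc⟩, -⟩ := P.cover i j hi hj
      exact ⟨r, hr, Rect.mem_cells.mpr hc⟩
    · rintro ⟨r, hr, hc⟩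
      have h1 := Rect.mem_cells.mp hc
      have h2 := P.inside r hr
      obtain ⟨_, _, _, _⟩ := h1
      omega
  have hcard := congrArg Finset.card key
  rw [Finset.card_product, Finset.card_range, Finset.card_biUnion] at hcard
  · rw [hcard]
    exact Finset.sum_congr rfl fun r _ => (Rect.card_cells r).symm
  · intro r hr s hs hne
    rw [Function.onFun, Finset.disjoint_left]
    intro p hp hq
    have hcr := Rect.mem_cells.mp hp
    have hcs := Rect.mem_cells.mp hq
    have hin := P.inside r hr
    have hi : p.1 < n := by obtain ⟨_, _, _, _⟩ := hcr; omega
    have hj : p.2 < n := by obtain ⟨_, _, _, _⟩ := hcr; omega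
    obtain ⟨u, -, hu⟩ := P.cover p.1 p.2 hi hj
    exact hne ((hu r ⟨hr, hcr⟩).trans (hu s ⟨hs, hcs⟩).symm)

/-! ### The exhaustive checker -/

/-- `noBad d k L c s mn mx = true` guarantees that no way of picking a sublist `T`
of `L` yields `k ≤ c + |T|`, `s + Σ T = 25` and `fold max mx T - fold min mn T ≤ d`. -/
def noBad (d k : ℕ) : List ℕ → ℕ → ℕ → ℕ → ℕ → Bool
  | [], c, s, mn, mx => !(decide (k ≤ c) && decide (s = 25) && decide (mx - mn ≤ d))
  | a :: rest, c, s, mn, mx =>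
      noBad d k rest c s mn mx &&
      noBad d k rest (c+1) (s+a) (min mn a) (max mx a)

lemma foldr_max_init (a mx : ℕ) (T : List ℕ) :
    T.foldr max (max mx a) = max a (T.foldr max mx) := by
  induction T with
  | nil => simp [Nat.max_comm]
  | cons b T ih => simp only [List.foldr, ih]; omega

lemma foldr_min_init (a mn : ℕ) (T : List ℕ) :
    T.foldr min (min mn a) = min a (T.foldr min mn) := by
  induction T with
  | nil => simp [Nat.min_comm]
  | cons b T ih => simp only [List.foldr, ih]; omega

lemma foldr_max_mem (mx : ℕ) (T : List ℕ) :
    T.foldr max mx = mx ∨ T.foldr max mx ∈ T := by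
  induction T with
  | nil => exact Or.inl rfl
  | cons b T ih =>
    simp only [List.foldr]
    rcases max_choice b (T.foldr max mx) with h | h
    · exact Or.inr (by rw [h]; exact List.mem_cons_self)
    · rcases ih with h' | h'
      · exact Or.inl (by rw [h, h'])
      · exact Or.inr (by rw [h]; exact List.mem_cons_of_mem b h')

lemma foldr_min_mem (mn : ℕ) (T : List ℕ) :
    T.foldr min mn = mn ∨ T.foldr min mn ∈ T := by
  induction T with
  | nil => exact Or.inl rfl
  | cons b T ih =>
    simp only [List.foldr]
    rcases min_choice b (T.foldr min mn) with h | h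
    · exact Or.inr (by rw [h]; exact List.mem_cons_self)
    · rcases ih with h' | h'
      · exact Or.inl (by rw [h, h'])
      · exact Or.inr (by rw [h]; exact List.mem_cons_of_mem b h')

lemma noBad_spec (d k : ℕ) : ∀ (L : List ℕ) (c s mn mx : ℕ),
    noBad d k L c s mn mx = true →
    ∀ T : List ℕ, T.Sublist L →
      ¬(k ≤ c + T.length ∧ s + T.sum = 25 ∧
        T.foldr max mx - T.foldr min mn ≤ d) := by
  intro L
  induction L with
  | nil =>
    intro c s mn mx h T hT
    rw [List.sublist_nil] at hT
    subst hT
    simp only [noBad, Bool.not_eq_true', Bool.and_eq_false_iff] at h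
    rintro ⟨h1, h2, h3⟩
    simp only [List.length_nil, List.sum_nil, List.foldr] at h1 h2 h3
    rcases h with (h | h) | h <;> simp_all
  | cons a L ih =>
    intro c s mn mx h T hT
    simp only [noBad, Bool.and_eq_true] at h
    obtain ⟨h1, h2⟩ := h
    cases hT with
    | cons _ hT' => exact ih c s mn mx h1 T hT'
    | cons_cons _ hT' =>
      rename_i T'
      intro ⟨g1, g2, g3⟩
      refine ih (c+1) (s+a) (min mn a) (max mx a) h2 T' hT' ⟨?_, ?_, ?_⟩
      · simp only [List.length_cons] at g1; omega
      · simp only [List.sum_cons] at g2; omega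
      · rw [foldr_max_init, foldr_min_init]
        simp only [List.foldr] at g3
        omega

/-! ### Shapes -/

/-- All possible normalized shapes of rectangles fitting in a `5 × 5` square. -/
def shapesL : List (ℕ × ℕ) :=
  [(1,1),(1,2),(1,3),(1,4),(1,5),(2,2),(2,3),(2,4),(2,5),(3,3),(3,4),(3,5),(4,4),(4,5),(5,5)]

/-- The list of the corresponding areas. -/
def areasL : List ℕ := shapesL.map fun p => p.1 * p.2

/-- The normalized shape of a rectangle. -/
def Rect.shape (r : Rect) : ℕ × ℕ := (min r.w r.h, max r.w r.h)

lemma shape_mem {a b : ℕ} (h1 : 1 ≤ a) (h2 : a ≤ b) (h3 : b ≤ 5) : (a, b) ∈ shapesL := by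
  have ha : a ≤ 5 := le_trans h2 h3
  interval_cases a <;> interval_cases b <;> decide

lemma checker1 : noBad 3 2 areasL 0 0 25 0 = true := by decide
lemma checker2 : noBad 4 4 areasL 0 0 25 0 = true := by decide

/-- The key lower-bound lemma. -/
lemma no_small_defect (P : Mondrian 5) (k d : ℕ) (hk : k ≤ P.rects.card)
    (hd : P.defect ≤ d) (hnb : noBad d k areasL 0 0 25 0 = true) : False := by
  classical
  set f : ℕ × ℕ → ℕ := fun p => p.1 * p.2 with hf
  set S : Finset (ℕ × ℕ) := P.rects.image Rect.shape with hS
  have hinj : Set.InjOn Rect.shape P.rects := by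
    intro r hr s hs h
    by_contra hne
    apply P.noncong r hr s hs hne
    unfold Rect.Congruent
    simp only [Rect.shape, Prod.mk.injEq] at h
    omega
  have hcard : S.card = P.rects.card := Finset.card_image_of_injOn hinj
  have harea : ∀ r : Rect, f r.shape = r.area := by
    intro r
    simp only [hf, Rect.shape, Rect.area]
    exact min_mul_max r.w r.h
  have hsum : S.sum f = 25 := by
    rw [hS, Finset.sum_image fun r hr s hs => hinj hr hs]
    have := P.sum_area
    calc ∑ r ∈ P.rects, f r.shape = ∑ r ∈ P.rects, r.area :=
          Finset.sum_congr rfl fun r _ => harea r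
      _ = 25 := P.sum_area
  have hmemS : ∀ p ∈ S, p ∈ shapesL ∧ ∃ r ∈ P.rects, r.shape = p := by
    intro p hp
    rw [hS, Finset.mem_image] at hp
    obtain ⟨r, hr, hrp⟩ := hp
    have hpos := P.pos r hr
    have hin := P.inside r hr
    refine ⟨?_, r, hr, hrp⟩
    rw [← hrp]
    exact shape_mem (by simp [Rect.shape]; omega) (min_le_max) (by simp [Rect.shape]; omega)
  have hpair : ∀ a ∈ S, ∀ b ∈ S, f a - f b ≤ d := by
    intro a ha b hb
    obtain ⟨-, r, hr, hra⟩ := hmemS a ha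
    obtain ⟨-, s, hs, hsb⟩ := hmemS b hb
    rw [← hra, ← hsb, harea, harea]
    calc r.area - s.area ≤ P.rects.sup fun t => r.area - t.area :=
          Finset.le_sup (f := fun t => r.area - t.area) hs
      _ ≤ P.defect := Finset.le_sup (f := fun r => P.rects.sup fun s => r.area - s.area) hr
      _ ≤ d := hd
  -- pass to a sublist of areasL
  have hsubM : S.val.map f ≤ (↑areasL : Multiset ℕ) := by
    have h1 : S.val ≤ (⟨↑shapesL, by decide⟩ : Finset (ℕ × ℕ)).val := by
      rw [Finset.val_le_iff]
      intro p hp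
      have := (hmemS p hp).1
      simpa [Finset.mem_mk] using this
    calc S.val.map f ≤ Multiset.map f ↑shapesL := Multiset.map_le_map h1
      _ = ↑areasL := rfl
  set T₀ : List ℕ := (S.val.map f).toList with hT₀
  have hT0coe : (↑T₀ : Multiset ℕ) = S.val.map f := Multiset.coe_toList _
  have hsp : T₀.Subperm areasL := Multiset.coe_le.mp (by rw [hT0coe]; exact hsubM)
  obtain ⟨T, hTperm, hTsub⟩ := hsp
  have hmemT : ∀ a ∈ T, ∃ p ∈ S, f p = a := by
    intro a ha
    have : a ∈ T₀ := hTperm.mem_iff.mp ha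
    rw [hT₀, Multiset.mem_toList, Multiset.mem_map] at this
    obtain ⟨p, hp, hpa⟩ := this
    exact ⟨p, hp, hpa⟩
  have hle25 : ∀ a ∈ T, a ≤ 25 := by
    intro a ha
    obtain ⟨p, hp, hpa⟩ := hmemT a ha
    have hmem := (hmemS p hp).1
    have : ∀ q ∈ shapesL, f q ≤ 25 := by decide
    rw [← hpa]; exact this p hmem
  have hpairT : ∀ a ∈ T, ∀ b ∈ T, a - b ≤ d := by
    intro a ha b hb
    obtain ⟨p, hp, hpa⟩ := hmemT a ha
    obtain ⟨q, hq, hqb⟩ := hmemT b hb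
    rw [← hpa, ← hqb]; exact hpair p hp q hq
  refine noBad_spec d k areasL 0 0 25 0 hnb T hTsub ⟨?_, ?_, ?_⟩
  · have : T.length = P.rects.card := by
      rw [hTperm.length_eq, hT₀, Multiset.length_toList, Multiset.card_map, ← hcard]
      rfl
    omega
  · have : T.sum = 25 := by
      rw [hTperm.sum_eq, hT₀, Multiset.sum_toList]
      exact hsum
    omega
  · rcases foldr_max_mem 0 T with h | h
    · omega
    · rcases foldr_min_mem 25 T with h' | h'
      · have := hle25 _ h
        omega
      · exact hpairT _ h _ h'

/-! ### The witness partition -/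

def wrects : Finset Rect := {⟨0,0,2,5⟩, ⟨2,0,3,3⟩, ⟨2,3,3,2⟩}

def witness : Mondrian 5 where
  rects := wrects
  pos := by decide
  inside := by decide
  cover := by
    intro i j hi hj
    have h : ∀ i j : Fin 5,
        ∃ r ∈ wrects, r.Covers i j ∧ ∀ s ∈ wrects, s.Covers i j → s = r := by decide
    obtain ⟨r, hr, hc, hu⟩ := h ⟨i, hi⟩ ⟨j, hj⟩
    exact ⟨r, ⟨hr, hc⟩, fun s ⟨hs, hcs⟩ => hu s hs hcs⟩
  noncong := by decide

lemma witness_card : witness.rects.card = 3 := by decide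

lemma witness_defect : witness.defect = 4 := by decide

/-! ### The main theorem -/

/-- The minimum defect over all Mondrian partitions of the `5 × 5` square is `4`:
`d(5) = d_3(5) = 4`, and every Mondrian partition of the `5 × 5` square into
`k ≥ 4` rectangles has defect strictly greater than `4`. -/
theorem mondrian_five : mondrianD 5 = 4 ∧ mondrianDk 5 3 = 4 ∧
    ∀ P : Mondrian 5, 4 ≤ P.rects.card → 4 < P.defect := by
  have lb : ∀ P : Mondrian 5, 2 ≤ P.rects.card → 4 ≤ P.defect := by
    intro P hP
    by_contra h
    exact no_small_defect P 2 3 hP (by omega) checker1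
  have lb4 : ∀ P : Mondrian 5, 4 ≤ P.rects.card → 4 < P.defect := by
    intro P hP
    by_contra h
    exact no_small_defect P 4 4 hP (by omega) checker2
  have hmem : (4:ℕ) ∈ {d | ∃ P : Mondrian 5, 2 ≤ P.rects.card ∧ P.defect = d} :=
    ⟨witness, by rw [witness_card]; omega, witness_defect⟩
  have hmem3 : (4:ℕ) ∈ {d | ∃ P : Mondrian 5, P.rects.card = 3 ∧ P.defect = d} :=
    ⟨witness, witness_card, witness_defect⟩
  refine ⟨?_, ?_, lb4⟩
  · rw [mondrianD]
    refine le_antisymm (Nat.sInf_le hmem) (le_csInf ⟨4, hmem⟩ ?_)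
    rintro d ⟨P, hc, rfl⟩
    exact lb P hc
  · rw [mondrianDk]
    refine le_antisymm (Nat.sInf_le hmem3) (le_csInf ⟨4, hmem3⟩ ?_)
    rintro d ⟨P, hc, rfl⟩
    exact lb P (by omega)
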